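/- If a_n = 1 − (p·j_n + 1)·q^n·c for a constant c > 0, where j_n = O(n) with j_n → ∞, and r_n = ⌊⌊q^{−n}⌋ / j_n⌋, then a_n^{r_n} → exp(−p·c) as n → ∞. -/

import Mathlib

open Filter Real Topology

theorem stmt15 (p q c : ℝ) (hp0 : 0 < p) (hp1 : p < 1)
    (hq0 : 0 < q) (hq1 : q < 1) (hc : 0 < c)
    (j : ℕ → ℕ) (hjpos : ∀ n, 0 < j n)
    (hjO : ∃ C : ℝ, ∀ n : ℕ, (j n : ℝ) ≤ C * (n + 1))
    (hjtop : Filter.Tendsto (fun n => (j n : ℝ)) Filter.atTop Filter.atTop) :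
    Filter.Tendsto
      (fun n : ℕ => (1 - (p * j n + 1) * q ^ n * c) ^ (⌊((1 : ℝ) / q) ^ n⌋₊ / j n))
      Filter.atTop (nhds (Real.exp (-(p * c)))) := by
  set x : ℕ → ℝ := fun n => (p * j n + 1) * q ^ n * c with hxdef
  set r : ℕ → ℕ := fun n => ⌊((1 : ℝ) / q) ^ n⌋₊ / j n with hrdef
  have hjR : ∀ n, (0:ℝ) < j n := fun n => by exact_mod_cast hjpos n
  have hxpos : ∀ n, 0 < x n := by
    intro n
    have h1 : (0:ℝ) < p * j n + 1 := by positivity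
    have := pow_pos hq0 n
    positivity
  -- w n := (p * j n + 1) * q ^ n tends to 0
  have hw0 : Tendsto (fun n : ℕ => (p * j n + 1) * q ^ n) atTop (𝓝 0) := by
    obtain ⟨C, hC⟩ := hjO
    have hupper : Tendsto (fun n : ℕ => (p * (C * (n + 1)) + 1) * q ^ n) atTop (𝓝 0) := by
      have h1 : Tendsto (fun n : ℕ => (n:ℝ) ^ 1 * q ^ n) atTop (𝓝 0) :=
        tendsto_pow_const_mul_const_pow_of_lt_one 1 hq0.le hq1
      have h2 : Tendsto (fun n : ℕ => q ^ n) atTop (𝓝 0) :=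
        tendsto_pow_atTop_nhds_zero_of_lt_one hq0.le hq1
      have : Tendsto (fun n : ℕ => p * C * ((n:ℝ) ^ 1 * q ^ n) + (p * C + 1) * q ^ n)
          atTop (𝓝 (p * C * 0 + (p * C + 1) * 0)) :=
        ((h1.const_mul _).add (h2.const_mul _))
      simp only [mul_zero, add_zero] at this
      convert this using 2 with n
      ring
    refine squeeze_zero (fun n => ?_) (fun n => ?_) hupper
    · have h1 : (0:ℝ) ≤ p * j n + 1 := by positivity
      positivity
    · have hq : (0:ℝ) ≤ q ^ n := (pow_pos hq0 n).le
      have : p * (j n : ℝ) + 1 ≤ p * (C * (n + 1)) + 1 := by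
        have := hC n
        nlinarith
      nlinarith [this, hq, mul_le_mul_of_nonneg_right this hq]
  have hx0 : Tendsto x atTop (𝓝 0) := by
    have := hw0.mul_const c
    simpa using this
  -- eventually x n < 1
  have hxlt1 : ∀ᶠ n in atTop, x n < 1 :=
    hx0.eventually (eventually_lt_nhds one_pos) |>.mono (fun n h => h)
  -- Step C : r n * x n → p * c
  have hinvj : Tendsto (fun n : ℕ => ((j n : ℝ))⁻¹) atTop (𝓝 0) :=
    hjtop.inv_tendsto_atTop
  have hru : ∀ n, (r n : ℝ) * x n ≤ (p + (j n : ℝ)⁻¹) * c := by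
    intro n
    have hm := hjR n
    have h1 : ((r n : ℕ) : ℝ) ≤ (⌊((1 : ℝ) / q) ^ n⌋₊ : ℝ) / (j n : ℝ) := Nat.cast_div_le
    have h2 : ((⌊((1 : ℝ) / q) ^ n⌋₊ : ℝ)) ≤ ((1 : ℝ) / q) ^ n :=
      Nat.floor_le (by positivity)
    have hxn := (hxpos n).le
    have h3 : (r n : ℝ) ≤ ((1 : ℝ) / q) ^ n / (j n : ℝ) :=
      h1.trans (by gcongr)
    have h4 : (r n : ℝ) * x n ≤ (((1 : ℝ) / q) ^ n / (j n : ℝ)) * x n :=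
      mul_le_mul_of_nonneg_right h3 hxn
    refine h4.trans_eq ?_
    have hqn : q ^ n ≠ 0 := (pow_pos hq0 n).ne'
    simp only [hxdef, one_div, inv_pow]
    field_simp [hxdef]
  have hrl : ∀ n, ((p + (j n : ℝ)⁻¹) * c
      - ((p * j n + 1) * q ^ n) * c * ((j n : ℝ)⁻¹ + 1)) ≤ (r n : ℝ) * x n := by
    intro n
    have hm := hjR n
    set N : ℕ := ⌊((1 : ℝ) / q) ^ n⌋₊ with hN
    have h1 : ((1 : ℝ) / q) ^ n < (N : ℝ) + 1 := Nat.lt_floor_add_one _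
    have h2 : (N : ℝ) / (j n : ℝ) < ((N / j n : ℕ) : ℝ) + 1 := by
      have hdm := Nat.div_add_mod N (j n)
      have hmod := Nat.mod_lt N (hjpos n)
      have : (N : ℝ) < ((N / j n : ℕ) : ℝ) * (j n : ℝ) + (j n : ℝ) := by
        have h1 : ((j n : ℕ) * (N / j n) + N % j n : ℕ) = N := hdm
        have h2 : (N : ℝ) = (j n : ℝ) * ((N / j n : ℕ) : ℝ) + ((N % j n : ℕ) : ℝ) := by
          exact_mod_cast h1.symm
        have h3 : ((N % j n : ℕ) : ℝ) < (j n : ℝ) := by exact_mod_cast hmod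
        linarith
      rw [div_lt_iff₀ hm]
      linarith
    have h3 : ((1 : ℝ) / q) ^ n / (j n : ℝ) - (j n : ℝ)⁻¹ - 1 < (r n : ℝ) := by
      have : (((1 : ℝ) / q) ^ n - 1) / (j n : ℝ) < ((N / j n : ℕ) : ℝ) + 1 := by
        calc (((1 : ℝ) / q) ^ n - 1) / (j n : ℝ) ≤ (N : ℝ) / (j n : ℝ) := by
              gcongr; linarith
          _ < _ := h2
      have hr' : (r n : ℝ) = ((N / j n : ℕ) : ℝ) := rfl
      rw [hr']
      rw [sub_div] at this
      have : ((1 : ℝ) / q) ^ n / (j n : ℝ) - 1 / (j n : ℝ) - 1 < ((N / j n : ℕ) : ℝ) := by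
        linarith
      simpa [one_div] using this
    have hxn := hxpos n
    have h4 := mul_le_mul_of_nonneg_right h3.le hxn.le
    refine le_trans (le_of_eq ?_) h4
    have hqn : q ^ n ≠ 0 := (pow_pos hq0 n).ne'
    simp only [hxdef, one_div, inv_pow]
    field_simp [hxdef]
    ring
  have hCu : Tendsto (fun n => (p + (j n : ℝ)⁻¹) * c) atTop (𝓝 (p * c)) := by
    have := (hinvj.const_add p).mul_const c
    simpa using this
  have hCl : Tendsto (fun n => (p + (j n : ℝ)⁻¹) * c
      - ((p * j n + 1) * q ^ n) * c * ((j n : ℝ)⁻¹ + 1)) atTop (𝓝 (p * c)) := by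
    have h2 : Tendsto (fun n => ((p * j n + 1) * q ^ n) * c * ((j n : ℝ)⁻¹ + 1))
        atTop (𝓝 0) := by
      have h := (hw0.mul_const c).mul (hinvj.add_const 1)
      simpa using h
    simpa using hCu.sub h2
  have hCmain : Tendsto (fun n => (r n : ℝ) * x n) atTop (𝓝 (p * c)) :=
    tendsto_of_tendsto_of_tendsto_of_le_of_le hCl hCu hrl hru
  -- Step D : log(1 - x n) / (-(x n)) → 1
  have hslope : Tendsto (fun n => Real.log (1 - x n) / (-(x n))) atTop (𝓝 1) := by
    have hd : HasDerivAt Real.log 1 1 := by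
      simpa using Real.hasDerivAt_log one_ne_zero
    have hs := hasDerivAt_iff_tendsto_slope.mp hd
    have hg : Tendsto (fun n => 1 - x n) atTop (𝓝[≠] 1) := by
      refine tendsto_nhdsWithin_of_tendsto_nhds_of_eventually_within _ ?_ ?_
      · simpa using (tendsto_const_nhds.sub hx0)
      · exact Eventually.of_forall fun n => by
          simp only [Set.mem_compl_iff, Set.mem_singleton_iff]
          intro h
          have := hxpos n
          nlinarith [sub_eq_self.mp h]
    have := hs.comp hg
    refine this.congr fun n => ?_
    simp [slope, Real.log_one]
    ring_nf
  -- Step E : r n * log (1 - x n) → -(p*c)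
  have hE : Tendsto (fun n => (r n : ℝ) * Real.log (1 - x n)) atTop (𝓝 (-(p * c))) := by
    have := (hCmain.mul hslope).neg
    simp only [mul_one] at this
    refine this.congr fun n => ?_
    have hxn := (hxpos n).ne'
    field_simp
  -- Step F : conclude
  have hF := (Real.continuous_exp.continuousAt.tendsto.comp hE)
  refine hF.congr' ?_
  filter_upwards [hxlt1] with n hn
  have hpos : 0 < 1 - x n := by linarith
  simp only [Function.comp_apply]
  rw [← Real.exp_log hpos, ← Real.exp_nat_mul]
  rw [Real.exp_log hpos]
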